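/- Let T be a tree. Then the independence number of T satisfies α(T) = |Supp(T)| + |V(F_N(T))|/2, where F_N(T) is the subgraph of T induced on the vertices outside the closed neighborhood of Supp(T). -/

import Mathlib

open SimpleGraph Matrix

attribute [local instance] Classical.propDecidable

noncomputable section

variable {V : Type*}

/-- A graph is singular if its adjacency matrix (over ℝ) has nontrivial kernel. -/
def IsSingular [Fintype V] (G : SimpleGraph V) : Prop :=
  ∃ x : V → ℝ, x ≠ 0 ∧ G.adjMatrix ℝ *ᵥ x = 0

/-- The support of the null space of the adjacency matrix. -/
def nullSupp [Fintype V] (G : SimpleGraph V) : Set V :=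
  {v | ∃ x : V → ℝ, G.adjMatrix ℝ *ᵥ x = 0 ∧ x v ≠ 0}

/-- The core: all neighbours of supported vertices. -/
def core [Fintype V] (G : SimpleGraph V) : Set V :=
  ⋃ v ∈ nullSupp G, G.neighborSet v

/-- Vertex set of the N-forest: complement of the closed neighbourhood of the support. -/
def fnVerts [Fintype V] (G : SimpleGraph V) : Set V :=
  (nullSupp G ∪ core G)ᶜ

/-- A matching as a set of pairwise disjoint edges of `G`. -/
def IsMatchingSet (G : SimpleGraph V) (M : Set (Sym2 V)) : Prop :=
  M ⊆ G.edgeSet ∧ M.Pairwise fun e f => ∀ v : V, ¬(v ∈ e ∧ v ∈ f)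

/-- `M` saturates `v`. -/
def Saturates (M : Set (Sym2 V)) (v : V) : Prop := ∃ e ∈ M, v ∈ e

/-- A perfect matching saturates every vertex. -/
def IsPerfectMatchingSet (G : SimpleGraph V) (M : Set (Sym2 V)) : Prop :=
  IsMatchingSet G M ∧ ∀ v : V, Saturates M v

/-- Matching number. -/
def matchNum [Fintype V] (G : SimpleGraph V) : ℕ :=
  sSup {n | ∃ M : Set (Sym2 V), IsMatchingSet G M ∧ M.ncard = n}

/-- Maximum matchings. -/
def IsMaxMatching [Fintype V] (G : SimpleGraph V) (M : Set (Sym2 V)) : Prop :=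
  IsMatchingSet G M ∧ M.ncard = matchNum G

/-- Independent set of vertices. -/
def IsIndepSet (G : SimpleGraph V) (I : Set V) : Prop :=
  I.Pairwise fun a b => ¬ G.Adj a b

/-- Independence number. -/
def indepNum [Fintype V] (G : SimpleGraph V) : ℕ :=
  sSup {n | ∃ I : Set V, _root_.IsIndepSet G I ∧ I.ncard = n}

/-- Maximum independent sets. -/
def IsMaxIndep [Fintype V] (G : SimpleGraph V) (I : Set V) : Prop :=
  _root_.IsIndepSet G I ∧ I.ncard = _root_.indepNum G

/-- The graph `G` with all vertices in `S` deleted (kept as isolated vertices). -/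
def avoid (G : SimpleGraph V) (S : Set V) : SimpleGraph V where
  Adj a b := G.Adj a b ∧ a ∉ S ∧ b ∉ S
  symm := ⟨fun a b h => ⟨h.1.symm, h.2.2, h.2.1⟩⟩
  loopless := ⟨fun a h => G.loopless.irrefl a h.1⟩

/-- `G` is unicyclic: connected with as many edges as vertices. -/
def IsUnicyclic [Fintype V] (G : SimpleGraph V) : Prop :=
  G.Connected ∧ G.edgeFinset.card = Fintype.card V

/-- `C` is the vertex set of the (unique) cycle of `G`:
the induced subgraph on `C` is connected and 2-regular. -/
def IsCycleVerts [Fintype V] (G : SimpleGraph V) (C : Set V) : Prop :=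
  C.Nonempty ∧ (G.induce C).Connected ∧ ∀ v : C, (G.induce C).degree v = 2

/-- Vertices of the pendant tree of `G` at the cycle vertex `v`: all vertices
reachable from `v` after deleting the other cycle vertices. -/
def pendantVerts (G : SimpleGraph V) (C : Set V) (v : V) : Set V :=
  {u | (avoid G (C \ {v})).Reachable v u}

lemma mem_pendantVerts_self (G : SimpleGraph V) (C : Set V) (v : V) :
    v ∈ pendantVerts G C v := Reachable.refl v

/-- The pendant tree of `G` at `v` (as an induced subgraph). -/
def pendantTree (G : SimpleGraph V) (C : Set V) (v : V) :
    SimpleGraph (pendantVerts G C v) := G.induce (pendantVerts G C v)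

/-- The rest of the graph, `G − G{v}`. -/
def pendantRest (G : SimpleGraph V) (C : Set V) (v : V) :
    SimpleGraph ((pendantVerts G C v)ᶜ : Set V) := G.induce (pendantVerts G C v)ᶜ

/-- `v` is matched in a graph `H`: every maximum matching of `H` saturates `v`. -/
def MatchedIn {W : Type*} [Fintype W] (H : SimpleGraph W) (w : W) : Prop :=
  ∀ M : Set (Sym2 W), IsMaxMatching H M → Saturates M w

/-- A unicyclic graph is of Type I if some cycle vertex is matched in its pendant tree. -/
def TypeI [Fintype V] (G : SimpleGraph V) (C : Set V) : Prop :=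
  ∃ v ∈ C, MatchedIn (pendantTree G C v) ⟨v, mem_pendantVerts_self G C v⟩

/-- Type II: every cycle vertex is missed by some maximum matching of its pendant tree. -/
def TypeII [Fintype V] (G : SimpleGraph V) (C : Set V) : Prop :=
  ∀ v ∈ C, ¬ MatchedIn (pendantTree G C v) ⟨v, mem_pendantVerts_self G C v⟩

end

section Aux
open Finset SimpleGraph
variable {V : Type*} [Fintype V]

lemma indep_ncard_le (G : SimpleGraph V) {n : ℕ}
    (hn : n ∈ {n | ∃ I : Set V, _root_.IsIndepSet G I ∧ I.ncard = n}) : n ≤ Fintype.card V := by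
  obtain ⟨I, _, rfl⟩ := hn
  calc I.ncard ≤ (Set.univ : Set V).ncard :=
        Set.ncard_le_ncard (Set.subset_univ I) Set.finite_univ
    _ = Fintype.card V := by rw [Set.ncard_univ, Nat.card_eq_fintype_card]

lemma indepSet_bddAbove (G : SimpleGraph V) :
    BddAbove {n | ∃ I : Set V, _root_.IsIndepSet G I ∧ I.ncard = n} :=
  ⟨Fintype.card V, fun _ hn => indep_ncard_le G hn⟩

lemma le_indepNum (G : SimpleGraph V) {I : Set V} (h : _root_.IsIndepSet G I) :
    I.ncard ≤ _root_.indepNum G :=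
  le_csSup (indepSet_bddAbove G) ⟨I, h, rfl⟩

lemma exists_maxIndep (G : SimpleGraph V) :
    ∃ I : Set V, _root_.IsIndepSet G I ∧ I.ncard = _root_.indepNum G := by
  have h := Nat.sSup_mem (s := {n | ∃ I : Set V, _root_.IsIndepSet G I ∧ I.ncard = n})
    ⟨0, ∅, fun a ha => absurd ha (Set.notMem_empty a), Set.ncard_empty V⟩
    (indepSet_bddAbove G)
  obtain ⟨I, hI, hc⟩ := h
  exact ⟨I, hI, hc⟩

lemma exists_leaf (G : SimpleGraph V) (hG : G.IsAcyclic) (he : G.edgeSet.Nonempty) :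
    ∃ u w, G.Adj u w ∧ ∀ d, G.Adj u d → d = w := by
  classical
  set S : Set ℕ := {n | ∃ (a b : V) (p : G.Walk a b), p.IsPath ∧ p.length = n} with hS
  have hbdd : BddAbove S := by
    refine ⟨Fintype.card V, fun n hn => ?_⟩
    obtain ⟨a, b, p, hp, rfl⟩ := hn
    exact hp.length_lt.le
  obtain ⟨e, hein⟩ := he
  induction e with
  | h e1 e2 =>
    have hadj : G.Adj e1 e2 := hein
    have h1 : (1 : ℕ) ∈ S :=
      ⟨e1, e2, SimpleGraph.Walk.cons hadj SimpleGraph.Walk.nil, by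
        simp [SimpleGraph.Walk.cons_isPath_iff, hadj.ne], rfl⟩
    obtain ⟨a, b, p, hp, hlen⟩ := Nat.sSup_mem ⟨1, h1⟩ hbdd
    have key : ∀ (b a : V) (q : G.Walk b a), q.IsPath → q.length = sSup S →
        ∃ u w, G.Adj u w ∧ ∀ d, G.Adj u d → d = w := by
      intro b a q hq hqlen
      have hN1 : 1 ≤ sSup S := le_csSup hbdd h1
      cases q with
      | nil => simp at hqlen; omega
      | cons h r =>
        rename_i c
        refine ⟨b, c, h, fun d hd => ?_⟩
        by_contra hdc
        have hdb : d ≠ b := fun hh => (hd.ne (hh ▸ rfl)).elim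
        by_cases hmem : d ∈ (SimpleGraph.Walk.cons h r).support
        · -- d in support: two distinct paths b → d, contradiction with acyclicity
          have hdr : d ∈ r.support := by
            rcases (SimpleGraph.Walk.mem_support_iff _).mp hmem with h1 | h2
            · exact absurd h1 hdb
            · exact h2
          obtain ⟨hr, hbr⟩ := (SimpleGraph.Walk.cons_isPath_iff h r).mp hq
          set r' := r.takeUntil d hdr with hr'
          have hr'path : r'.IsPath := hr.takeUntil hdr
          have hbr' : b ∉ r'.support := fun hin =>
            hbr (SimpleGraph.Walk.support_takeUntil_subset r hdr hin)
          have p1 : G.Walk b d := SimpleGraph.Walk.cons h r'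
          have hp1 : (SimpleGraph.Walk.cons h r').IsPath :=
            (SimpleGraph.Walk.cons_isPath_iff h r').mpr ⟨hr'path, hbr'⟩
          have hp2 : (SimpleGraph.Walk.cons hd SimpleGraph.Walk.nil).IsPath := by
            simp [SimpleGraph.Walk.cons_isPath_iff, hd.ne]
          have := SimpleGraph.isAcyclic_iff_path_unique.mp hG
            ⟨SimpleGraph.Walk.cons h r', hp1⟩ ⟨SimpleGraph.Walk.cons hd SimpleGraph.Walk.nil, hp2⟩
          have hlenEq := congrArg SimpleGraph.Walk.length (congrArg Subtype.val this)
          simp [SimpleGraph.Walk.length_cons] at hlenEq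
          exact hdc (SimpleGraph.Walk.Nil.eq hlenEq).symm
        · -- d not in support: extend
          have hext : ((SimpleGraph.Walk.cons h r).cons hd.symm).IsPath :=
            (SimpleGraph.Walk.cons_isPath_iff _ _).mpr ⟨hq, hmem⟩
          have hmemS : ((SimpleGraph.Walk.cons h r).cons hd.symm).length ∈ S :=
            ⟨d, a, _, hext, rfl⟩
          have hle := le_csSup hbdd hmemS
          simp only [SimpleGraph.Walk.length_cons] at hle hqlen
          omega
    exact key _ _ p.reverse hp.reverse (by rw [SimpleGraph.Walk.length_reverse, hlen])

variable {G : SimpleGraph V} {u w : V}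

lemma avoid_adj {S : Set V} {a b : V} :
    (avoid G S).Adj a b ↔ G.Adj a b ∧ a ∉ S ∧ b ∉ S := Iff.rfl

lemma avoid_le {S : Set V} : avoid G S ≤ G := fun _ _ h => h.1

lemma leaf_neighborFinset (huw : G.Adj u w) (hleaf : ∀ d, G.Adj u d → d = w) :
    G.neighborFinset u = {w} := by
  ext z
  simp only [SimpleGraph.mem_neighborFinset, Finset.mem_singleton]
  exact ⟨fun h => hleaf z h, fun h => h ▸ huw⟩

lemma ker_xw_eq_zero (huw : G.Adj u w) (hleaf : ∀ d, G.Adj u d → d = w) {x : V → ℝ}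
    (hx : G.adjMatrix ℝ *ᵥ x = 0) : x w = 0 := by
  have h := congrFun hx u
  rw [SimpleGraph.adjMatrix_mulVec_apply, leaf_neighborFinset huw hleaf] at h
  simpa using h

lemma ker_restrict (huw : G.Adj u w) (hleaf : ∀ d, G.Adj u d → d = w) {x : V → ℝ}
    (hx : G.adjMatrix ℝ *ᵥ x = 0) :
    (avoid G {u, w}).adjMatrix ℝ *ᵥ (fun v => if v = u ∨ v = w then 0 else x v) = 0 := by
  funext v
  rw [SimpleGraph.adjMatrix_mulVec_apply, Pi.zero_apply]
  by_cases hv : v = u ∨ v = w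
  · have hN : (avoid G {u, w}).neighborFinset v = ∅ := by
      ext z
      simp only [SimpleGraph.mem_neighborFinset, Finset.notMem_empty, iff_false]
      intro hz
      exact hz.2.1 (by rcases hv with rfl | rfl <;> simp)
    rw [hN, Finset.sum_empty]
  · push_neg at hv
    have hstep : ∀ z ∈ (avoid G {u, w}).neighborFinset v,
        (if z = u ∨ z = w then (0:ℝ) else x z) = x z := by
      intro z hz
      rw [SimpleGraph.mem_neighborFinset] at hz
      have hz2 : z ∉ ({u, w} : Set V) := hz.2.2
      simp only [Set.mem_insert_iff, Set.mem_singleton_iff] at hz2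
      simp [hz2]
    rw [Finset.sum_congr rfl hstep]
    have hsub : (avoid G {u, w}).neighborFinset v ⊆ G.neighborFinset v := by
      intro z hz
      rw [SimpleGraph.mem_neighborFinset] at hz ⊢
      exact hz.1
    rw [Finset.sum_subset hsub ?_]
    · have h := congrFun hx v
      rwa [SimpleGraph.adjMatrix_mulVec_apply, Pi.zero_apply] at h
    · intro z hzin hzout
      rw [SimpleGraph.mem_neighborFinset] at hzin hzout
      have hz2 : z ∈ ({u, w} : Set V) := by
        by_contra hc
        exact hzout ⟨hzin, by simp [Set.mem_insert_iff, Set.mem_singleton_iff, hv.1, hv.2], hc⟩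
      rcases hz2 with rfl | hz2
      · exact absurd (hleaf v hzin.symm) hv.2
      · rw [Set.mem_singleton_iff] at hz2; subst hz2
        exact ker_xw_eq_zero huw hleaf hx

lemma ker_extend (huw : G.Adj u w) (hleaf : ∀ d, G.Adj u d → d = w) {y : V → ℝ}
    (hy : (avoid G {u, w}).adjMatrix ℝ *ᵥ y = 0) :
    G.adjMatrix ℝ *ᵥ (fun v => if v = w then 0 else if v = u then
      -(∑ z ∈ (G.neighborFinset w).erase u, y z) else y v) = 0 := by
  set x : V → ℝ := fun v => if v = w then 0 else if v = u then
      -(∑ z ∈ (G.neighborFinset w).erase u, y z) else y v with hxdef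
  have hxw : x w = 0 := by simp [hxdef]
  have huNe : u ≠ w := huw.ne
  have hxu : x u = -(∑ z ∈ (G.neighborFinset w).erase u, y z) := by simp [hxdef, huNe]
  funext v
  rw [SimpleGraph.adjMatrix_mulVec_apply, Pi.zero_apply]
  by_cases hvu : v = u
  · subst hvu
    rw [leaf_neighborFinset huw hleaf, Finset.sum_singleton, hxw]
  by_cases hvw : v = w
  · rw [hvw]
    have huN : u ∈ G.neighborFinset w := by
      rw [SimpleGraph.mem_neighborFinset]; exact huw.symm
    rw [← Finset.add_sum_erase _ x huN, hxu]
    have : ∀ z ∈ (G.neighborFinset w).erase u, x z = y z := by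
      intro z hz
      have hz1 : z ≠ u := Finset.ne_of_mem_erase hz
      have hz2 : G.Adj w z := (SimpleGraph.mem_neighborFinset _ _ _).mp (Finset.mem_of_mem_erase hz)
      simp [hxdef, hz1, hz2.ne']
    rw [Finset.sum_congr rfl this]
    ring
  · -- v ∉ {u, w}
    have hsub : (avoid G {u, w}).neighborFinset v ⊆ G.neighborFinset v := by
      intro z hz
      rw [SimpleGraph.mem_neighborFinset] at hz ⊢
      exact hz.1
    have hvS : v ∉ ({u, w} : Set V) := by
      simp [Set.mem_insert_iff, Set.mem_singleton_iff, hvu, hvw]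
    rw [← Finset.sum_subset hsub ?_]
    · have hstep : ∀ z ∈ (avoid G {u, w}).neighborFinset v, x z = y z := by
        intro z hz
        rw [SimpleGraph.mem_neighborFinset] at hz
        have hz2 : z ∉ ({u, w} : Set V) := hz.2.2
        simp only [Set.mem_insert_iff, Set.mem_singleton_iff, not_or] at hz2
        simp [hxdef, hz2.1, hz2.2]
      rw [Finset.sum_congr rfl hstep]
      have h := congrFun hy v
      rwa [SimpleGraph.adjMatrix_mulVec_apply, Pi.zero_apply] at h
    · intro z hzin hzout
      rw [SimpleGraph.mem_neighborFinset] at hzin hzout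
      have hz2 : z ∈ ({u, w} : Set V) := by
        by_contra hc
        exact hzout ⟨hzin, hvS, hc⟩
      rcases hz2 with rfl | hz2
      · exact absurd (hleaf v hzin.symm) hvw
      · rw [Set.mem_singleton_iff] at hz2; subst hz2
        exact hxw

lemma isolated_mem_nullSupp {H : SimpleGraph V} {v : V} (h : ∀ z, ¬ H.Adj v z) :
    v ∈ nullSupp H := by
  refine ⟨Pi.single v 1, ?_, by simp⟩
  funext j
  rw [SimpleGraph.adjMatrix_mulVec_apply, Pi.zero_apply]
  refine Finset.sum_eq_zero fun z hz => ?_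
  rw [SimpleGraph.mem_neighborFinset] at hz
  have hzv : z ≠ v := fun hh => h j (hh ▸ hz).symm
  simp [Pi.single_eq_of_ne hzv]

lemma mem_nullSupp_avoid_of_mem {S : Set V} {v : V} (hv : v ∈ S) :
    v ∈ nullSupp (avoid G S) :=
  isolated_mem_nullSupp fun z hz => hz.2.1 hv

lemma w_not_mem_nullSupp (huw : G.Adj u w) (hleaf : ∀ d, G.Adj u d → d = w) :
    w ∉ nullSupp G := by
  rintro ⟨x, hk, hnz⟩
  exact hnz (ker_xw_eq_zero huw hleaf hk)

lemma mem_nullSupp_iff (huw : G.Adj u w) (hleaf : ∀ d, G.Adj u d → d = w) {v : V}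
    (hvu : v ≠ u) (hvw : v ≠ w) :
    v ∈ nullSupp G ↔ v ∈ nullSupp (avoid G {u, w}) := by
  constructor
  · rintro ⟨x, hk, hnz⟩
    refine ⟨_, ker_restrict huw hleaf hk, ?_⟩
    simpa [hvu, hvw] using hnz
  · rintro ⟨y, hk, hnz⟩
    refine ⟨_, ker_extend huw hleaf hk, ?_⟩
    simpa [hvu, hvw] using hnz

lemma avoid_walk_support {S : Set V} {a b : V} (p : (avoid G S).Walk a b) (ha : a ∉ S) :
    ∀ v ∈ p.support, v ∉ S := by
  induction p with
  | nil =>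
    intro v hv
    rw [SimpleGraph.Walk.support_nil, List.mem_singleton] at hv
    exact hv ▸ ha
  | @cons a c b h q ih =>
    intro v hv
    rw [SimpleGraph.Walk.support_cons, List.mem_cons] at hv
    rcases hv with rfl | hv
    · exact ha
    · exact ih h.2.2 v hv

lemma ker_component {H : SimpleGraph V} {y : V → ℝ}
    (hy : H.adjMatrix ℝ *ᵥ y = 0) (z : V) :
    H.adjMatrix ℝ *ᵥ (fun v => if H.Reachable z v then y v else 0) = 0 := by
  funext v
  rw [SimpleGraph.adjMatrix_mulVec_apply, Pi.zero_apply]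
  by_cases hr : H.Reachable z v
  · have hstep : ∀ z' ∈ H.neighborFinset v,
        (if H.Reachable z z' then y z' else 0) = y z' := fun z' hz' =>
      if_pos (hr.trans ((SimpleGraph.mem_neighborFinset _ _ _).mp hz').reachable)
    rw [Finset.sum_congr rfl hstep]
    have h := congrFun hy v
    rwa [SimpleGraph.adjMatrix_mulVec_apply, Pi.zero_apply] at h
  · refine Finset.sum_eq_zero fun z' hz' => if_neg fun hr' => ?_
    exact hr (hr'.trans ((SimpleGraph.mem_neighborFinset _ _ _).mp hz').symm.reachable)

lemma no_supported_neighbor (hG : G.IsAcyclic) (huw : G.Adj u w)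
    (hleaf : ∀ d, G.Adj u d → d = w) (hu : u ∉ nullSupp G) {z : V}
    (hz : G.Adj w z) (hzu : z ≠ u) :
    z ∉ nullSupp (avoid G {u, w}) := by
  rintro ⟨y, hk, hnz⟩
  set y' : V → ℝ := fun v => if (avoid G {u, w}).Reachable z v then y v else 0 with hy'
  have hk' : (avoid G {u, w}).adjMatrix ℝ *ᵥ y' = 0 := ker_component hk z
  have hzS : z ∉ ({u, w} : Set V) := by
    simp only [Set.mem_insert_iff, Set.mem_singleton_iff, not_or]
    exact ⟨hzu, hz.ne'⟩
  have hsum : (∑ z' ∈ (G.neighborFinset w).erase u, y' z') = y z := by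
    have h1 : (∑ z' ∈ (G.neighborFinset w).erase u, y' z') = y' z := by
      refine Finset.sum_eq_single z ?_ ?_
      · intro b hb hbz
        have hbw : G.Adj w b :=
          (SimpleGraph.mem_neighborFinset _ _ _).mp (Finset.mem_of_mem_erase hb)
        have hnotReach : ¬ (avoid G {u, w}).Reachable z b := by
          intro hreach
          obtain ⟨p⟩ := hreach
          set P := p.toPath with hP
          have hPsup : ∀ v ∈ (↑P : (avoid G {u, w}).Walk z b).support, v ∉ ({u, w} : Set V) :=
            avoid_walk_support _ hzS
          have hedges : ∀ e ∈ (↑P : (avoid G {u, w}).Walk z b).edges, e ∈ G.edgeSet :=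
            fun e he => SimpleGraph.edgeSet_mono avoid_le
              ((↑P : (avoid G {u, w}).Walk z b).edges_subset_edgeSet he)
          have hq1path : ((↑P : (avoid G {u, w}).Walk z b).transfer G hedges).IsPath :=
            P.2.transfer hedges
          have hzb : z ≠ b := fun hh => hbz hh.symm
          have hp2 : (SimpleGraph.Walk.cons hz.symm
              (SimpleGraph.Walk.cons hbw SimpleGraph.Walk.nil) : G.Walk z b).IsPath := by
            simp [SimpleGraph.Walk.cons_isPath_iff, hz.ne', hz.ne, hbw.ne, hzb]
          have hPeq := SimpleGraph.isAcyclic_iff_path_unique.mp hG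
            ⟨_, hq1path⟩ ⟨_, hp2⟩
          have hweq : (↑P : (avoid G {u, w}).Walk z b).transfer G hedges
              = SimpleGraph.Walk.cons hz.symm (SimpleGraph.Walk.cons hbw SimpleGraph.Walk.nil) :=
            congrArg Subtype.val hPeq
          have hwsup : w ∈ ((↑P : (avoid G {u, w}).Walk z b).transfer G hedges).support := by
            rw [hweq]
            simp [SimpleGraph.Walk.support_cons]
          rw [SimpleGraph.Walk.support_transfer] at hwsup
          exact hPsup w hwsup (by simp)
        simp [hy', hnotReach]
      · intro hnot
        exact absurd (Finset.mem_erase.mpr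
          ⟨hzu, (SimpleGraph.mem_neighborFinset _ _ _).mpr hz⟩) hnot
    rw [h1]
    show (if (avoid G {u, w}).Reachable z z then y z else 0) = y z
    exact if_pos (SimpleGraph.Reachable.refl z)
  have hext := ker_extend huw hleaf hk'
  refine hu ⟨_, hext, ?_⟩
  simp only [huw.ne, if_neg, if_pos, hsum]
  simp [hsum]
  exact hnz

lemma indepNum_avoid (huw : G.Adj u w) (hleaf : ∀ d, G.Adj u d → d = w) :
    _root_.indepNum (avoid G {u, w}) = _root_.indepNum G + 1 := by
  have huwne : u ≠ w := huw.ne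
  apply le_antisymm
  · obtain ⟨I', hI', hc'⟩ := exists_maxIndep (avoid G {u, w})
    set I2 : Set V := insert u (insert w I') with hI2
    have hI2indep : _root_.IsIndepSet (avoid G {u, w}) I2 := by
      intro a ha b hb hab
      intro hadj
      have ha' : a ∉ ({u, w} : Set V) → a ∈ I' := by
        intro hans
        simp only [Set.mem_insert_iff, Set.mem_singleton_iff, not_or] at hans
        rcases ha with rfl | rfl | h
        · exact absurd rfl hans.1
        · exact absurd rfl hans.2
        · exact h
      have hb' : b ∉ ({u, w} : Set V) → b ∈ I' := by
        intro hbns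
        simp only [Set.mem_insert_iff, Set.mem_singleton_iff, not_or] at hbns
        rcases hb with rfl | rfl | h
        · exact absurd rfl hbns.1
        · exact absurd rfl hbns.2
        · exact h
      exact hI' (ha' (fun h => hadj.2.1 h)) (hb' (fun h => hadj.2.2 h)) hab hadj
    have hwI2 : w ∈ I2 := by simp [hI2]
    have hJindep : _root_.IsIndepSet G (I2 \ {w}) := by
      intro a ha b hb hab hadj
      by_cases hau : a = u
      · subst hau
        exact hb.2 (hleaf b hadj)
      by_cases hbu : b = u
      · subst hbu
        exact ha.2 (hleaf a hadj.symm)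
      · refine hI2indep ha.1 hb.1 hab ⟨hadj, ?_, ?_⟩
        · simp only [Set.mem_insert_iff, Set.mem_singleton_iff, not_or]
          exact ⟨hau, ha.2⟩
        · simp only [Set.mem_insert_iff, Set.mem_singleton_iff, not_or]
          exact ⟨hbu, hb.2⟩
    have h1 : (I2 \ {w}).ncard + 1 = I2.ncard :=
      Set.ncard_diff_singleton_add_one hwI2 (Set.toFinite I2)
    have h2 : I'.ncard ≤ I2.ncard :=
      Set.ncard_le_ncard (fun x hx => by simp [hI2, hx]) (Set.toFinite I2)
    have h3 := le_indepNum G hJindep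
    omega
  · obtain ⟨I, hI, hc⟩ := exists_maxIndep G
    set I1 : Set V := insert u (I \ {w}) with hI1
    have hI1indep : _root_.IsIndepSet G I1 := by
      intro a ha b hb hab hadj
      by_cases hau : a = u
      · subst hau
        rcases hb with rfl | hb
        · exact hab rfl
        · exact hb.2 (hleaf b hadj)
      by_cases hbu : b = u
      · subst hbu
        rcases ha with rfl | ha
        · exact hab rfl
        · exact ha.2 (hleaf a hadj.symm)
      · have ha' : a ∈ I := by
          rcases ha with rfl | ha
          · exact absurd rfl hau
          · exact ha.1
        have hb' : b ∈ I := by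
          rcases hb with rfl | hb
          · exact absurd rfl hbu
          · exact hb.1
        exact hI ha' hb' hab hadj
    have hcard1 : I.ncard ≤ I1.ncard := by
      by_cases hw : w ∈ I
      · have hu : u ∉ I := fun hu => (hI hu hw huwne) huw
        have e1 : (I \ {w}).ncard + 1 = I.ncard :=
          Set.ncard_diff_singleton_add_one hw (Set.toFinite I)
        have hu' : u ∉ I \ {w} := fun h => hu h.1
        have e2 : I1.ncard = (I \ {w}).ncard + 1 :=
          Set.ncard_insert_of_notMem hu' (Set.toFinite _)
        omega
      · rw [hI1, Set.diff_singleton_eq_self hw]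
        exact Set.ncard_le_ncard (Set.subset_insert u I) (Set.toFinite _)
    have hwI1 : w ∉ I1 := by
      intro h
      rcases h with rfl | h
      · exact huwne rfl
      · exact h.2 rfl
    have hJ1indep : _root_.IsIndepSet (avoid G {u, w}) (insert w I1) := by
      intro a ha b hb hab hadj
      have ha' : a ∈ I1 := by
        rcases ha with rfl | ha
        · exact (hadj.2.1 (by simp)).elim
        · exact ha
      have hb' : b ∈ I1 := by
        rcases hb with rfl | hb
        · exact (hadj.2.2 (by simp)).elim
        · exact hb
      exact hI1indep ha' hb' hab hadj.1
    have e3 : (insert w I1).ncard = I1.ncard + 1 :=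
      Set.ncard_insert_of_notMem hwI1 (Set.toFinite _)
    have h4 := le_indepNum (avoid G {u, w}) hJ1indep
    omega

lemma mem_core_iff {H : SimpleGraph V} {v : V} :
    v ∈ core H ↔ ∃ s ∈ nullSupp H, H.Adj s v := by
  simp [core, SimpleGraph.mem_neighborSet]

lemma union_mem_iff (huw : G.Adj u w) (hleaf : ∀ d, G.Adj u d → d = w) {v : V}
    (hvu : v ≠ u) (hvw : v ≠ w) :
    v ∈ nullSupp G ∪ core G ↔ v ∈ nullSupp (avoid G {u, w}) ∪ core (avoid G {u, w}) := by
  constructor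
  · rintro (hS | hC)
    · exact Or.inl ((mem_nullSupp_iff huw hleaf hvu hvw).mp hS)
    · rw [mem_core_iff] at hC
      obtain ⟨s, hs, hadj⟩ := hC
      have hsw : s ≠ w := fun h => w_not_mem_nullSupp huw hleaf (h ▸ hs)
      have hsu : s ≠ u := by
        rintro rfl
        exact hvw (hleaf v hadj)
      refine Or.inr (mem_core_iff.mpr ⟨s, (mem_nullSupp_iff huw hleaf hsu hsw).mp hs,
        ⟨hadj, ?_, ?_⟩⟩)
      · simp [hsu, hsw]
      · simp [hvu, hvw]
  · rintro (hS | hC)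
    · exact Or.inl ((mem_nullSupp_iff huw hleaf hvu hvw).mpr hS)
    · rw [mem_core_iff] at hC
      obtain ⟨s, hs, hadj⟩ := hC
      have hsS : s ∉ ({u, w} : Set V) := hadj.2.1
      simp only [Set.mem_insert_iff, Set.mem_singleton_iff, not_or] at hsS
      exact Or.inr (mem_core_iff.mpr
        ⟨s, (mem_nullSupp_iff huw hleaf hsS.1 hsS.2).mpr hs, hadj.1⟩)

lemma u_not_mem_core (huw : G.Adj u w) (hleaf : ∀ d, G.Adj u d → d = w) :
    u ∉ core G := by
  rw [mem_core_iff]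
  rintro ⟨s, hs, hadj⟩
  have : s = w := hleaf s hadj.symm
  exact w_not_mem_nullSupp huw hleaf (this ▸ hs)

lemma edgeless_formula {H : SimpleGraph V} (h : ∀ a b, ¬ H.Adj a b) :
    _root_.indepNum H = (nullSupp H).ncard + (fnVerts H).ncard / 2 := by
  have hSuniv : nullSupp H = Set.univ := by
    ext v
    simp only [Set.mem_univ, iff_true]
    exact isolated_mem_nullSupp (fun z => h v z)
  have hfn : fnVerts H = ∅ := by
    rw [fnVerts, hSuniv]
    simp
  have hind : _root_.indepNum H = Fintype.card V := by
    apply le_antisymm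
    · exact csSup_le ⟨0, ∅, fun a ha => absurd ha (Set.notMem_empty a), Set.ncard_empty V⟩
        fun n hn => indep_ncard_le H hn
    · have : _root_.IsIndepSet H Set.univ := fun a _ b _ _ => h a b
      have hle := le_indepNum H this
      rwa [Set.ncard_univ, Nat.card_eq_fintype_card] at hle
  rw [hind, hSuniv, hfn, Set.ncard_univ, Nat.card_eq_fintype_card]
  simp

lemma main_aux : ∀ (n : ℕ) (G : SimpleGraph V), G.edgeSet.ncard ≤ n → G.IsAcyclic →
    _root_.indepNum G = (nullSupp G).ncard + (fnVerts G).ncard / 2 := by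
  intro n
  induction n with
  | zero =>
    intro G hcard hac
    have hempty : G.edgeSet = ∅ := by
      rcases Set.eq_empty_or_nonempty G.edgeSet with h | h
      · exact h
      · have := Set.ncard_pos (Set.toFinite _) |>.mpr h
        omega
    exact edgeless_formula fun a b hab =>
      Set.notMem_empty _ (hempty ▸ (SimpleGraph.mem_edgeSet G).mpr hab)
  | succ n ih =>
    intro G hcard hac
    by_cases hne : G.edgeSet.Nonempty
    · obtain ⟨u, w, huw, hleaf⟩ := exists_leaf G hac hne
      have hedgesub : ∀ {a b : V} (c : (avoid G {u, w}).Walk a b),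
          ∀ e ∈ c.edges, e ∈ G.edgeSet := fun c e he =>
        SimpleGraph.edgeSet_mono avoid_le (c.edges_subset_edgeSet he)
      have hac' : (avoid G {u, w}).IsAcyclic := fun v c hc =>
        hac (c.transfer G (hedgesub c)) (hc.transfer _)
      have hssub : (avoid G {u, w}).edgeSet ⊂ G.edgeSet := by
        refine ⟨SimpleGraph.edgeSet_mono avoid_le, fun hsup => ?_⟩
        have h1 : s(u, w) ∈ G.edgeSet := (SimpleGraph.mem_edgeSet G).mpr huw
        have h2 := hsup h1
        rw [SimpleGraph.mem_edgeSet] at h2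
        exact h2.2.1 (by simp)
      have hcard' : (avoid G {u, w}).edgeSet.ncard ≤ n := by
        have := Set.ncard_lt_ncard hssub (Set.toFinite _)
        omega
      have hIH := ih (avoid G {u, w}) hcard' hac'
      have hstep := indepNum_avoid huw hleaf
      have hwS : w ∉ nullSupp G := w_not_mem_nullSupp huw hleaf
      have huS' : u ∈ nullSupp (avoid G {u, w}) := mem_nullSupp_avoid_of_mem (by simp)
      have hwS' : w ∈ nullSupp (avoid G {u, w}) := mem_nullSupp_avoid_of_mem (by simp)
      by_cases hu : u ∈ nullSupp G
      · -- Case 1 : u supported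
        have hS'eq : nullSupp (avoid G {u, w}) = insert w (nullSupp G) := by
          ext v
          by_cases hvu : v = u
          · subst hvu; simp [huS', hu]
          by_cases hvw : v = w
          · subst hvw; simp [hwS']
          · rw [Set.mem_insert_iff]
            simp only [hvw, false_or]
            exact (mem_nullSupp_iff huw hleaf hvu hvw).symm
        have hS'card : (nullSupp (avoid G {u, w})).ncard = (nullSupp G).ncard + 1 := by
          rw [hS'eq, Set.ncard_insert_of_notMem hwS (Set.toFinite _)]
        have hwcore : w ∈ core G := mem_core_iff.mpr ⟨u, hu, huw⟩
        have hfneq : fnVerts G = fnVerts (avoid G {u, w}) := by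
          ext v
          by_cases hvu : v = u
          · subst hvu
            simp only [fnVerts, Set.mem_compl_iff, Set.mem_union]
            simp [hu, huS']
          by_cases hvw : v = w
          · subst hvw
            simp only [fnVerts, Set.mem_compl_iff, Set.mem_union]
            simp [hwcore, hwS']
          · simp only [fnVerts, Set.mem_compl_iff]
            rw [union_mem_iff huw hleaf hvu hvw]
        rw [← hfneq] at hIH
        omega
      · -- Case 2 : u not supported
        have hwcore : w ∉ core G := by
          rw [mem_core_iff]
          rintro ⟨s, hs, hadj⟩
          have hsu : s ≠ u := fun h => hu (h ▸ hs)
          have hsw : s ≠ w := hadj.ne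
          exact no_supported_neighbor hac huw hleaf hu hadj.symm hsu
            ((mem_nullSupp_iff huw hleaf hsu hsw).mp hs)
        have hucore : u ∉ core G := u_not_mem_core huw hleaf
        have hS'eq : nullSupp (avoid G {u, w}) = insert u (insert w (nullSupp G)) := by
          ext v
          by_cases hvu : v = u
          · subst hvu; simp [huS']
          by_cases hvw : v = w
          · subst hvw; simp [hwS']
          · rw [Set.mem_insert_iff, Set.mem_insert_iff]
            simp only [hvu, hvw, false_or]
            exact (mem_nullSupp_iff huw hleaf hvu hvw).symm
        have hS'card : (nullSupp (avoid G {u, w})).ncard = (nullSupp G).ncard + 2 := by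
          rw [hS'eq, Set.ncard_insert_of_notMem (by
              simp only [Set.mem_insert_iff, not_or]
              exact ⟨huw.ne, hu⟩) (Set.toFinite _),
            Set.ncard_insert_of_notMem hwS (Set.toFinite _)]
        have hufn' : u ∉ fnVerts (avoid G {u, w}) := by
          simp only [fnVerts, Set.mem_compl_iff, Set.mem_union, not_not]
          exact Or.inl huS'
        have hwfn' : w ∉ fnVerts (avoid G {u, w}) := by
          simp only [fnVerts, Set.mem_compl_iff, Set.mem_union, not_not]
          exact Or.inl hwS'
        have hfneq : fnVerts G = insert u (insert w (fnVerts (avoid G {u, w}))) := by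
          ext v
          by_cases hvu : v = u
          · subst hvu
            simp only [fnVerts, Set.mem_compl_iff, Set.mem_union, Set.mem_insert_iff]
            simp [hu, hucore]
          by_cases hvw : v = w
          · subst hvw
            simp only [fnVerts, Set.mem_compl_iff, Set.mem_union, Set.mem_insert_iff]
            simp [hwS, hwcore, huw.ne]
          · rw [Set.mem_insert_iff, Set.mem_insert_iff]
            simp only [hvu, hvw, false_or]
            simp only [fnVerts, Set.mem_compl_iff]
            rw [union_mem_iff huw hleaf hvu hvw]
        have hfncard : (fnVerts G).ncard = (fnVerts (avoid G {u, w})).ncard + 2 := by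
          rw [hfneq, Set.ncard_insert_of_notMem (by
              simp only [Set.mem_insert_iff, not_or]
              exact ⟨huw.ne, hufn'⟩) (Set.toFinite _),
            Set.ncard_insert_of_notMem hwfn' (Set.toFinite _)]
        omega
    · have hempty : G.edgeSet = ∅ := Set.not_nonempty_iff_eq_empty.mp hne
      exact edgeless_formula fun a b hab =>
        Set.notMem_empty _ (hempty ▸ (SimpleGraph.mem_edgeSet G).mpr hab)

end Aux

theorem indepNum_tree_formula {V : Type*} [Fintype V] (G : SimpleGraph V) (hT : G.IsTree) :
    _root_.indepNum G = (nullSupp G).ncard + (fnVerts G).ncard / 2 :=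
  main_aux G.edgeSet.ncard G le_rfl hT.IsAcyclic
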